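/- Let D, a, b, and z₁,…,z_k be positive integers and let S ⊆ {1,…,k}. Set x = ∏_{i∈S} z_i and y = (a/b)·∏_{i∉S} z_i (as positive real numbers). If x ≠ y, then |x^{1/D} − y^{1/D}| ≥ 1 / (b · D · max(x,y)^{(D−1)/D}). -/

import Mathlib

open Finset

/-- The precision bound from Section 4 of Murtagh–Vadhan: with `x = ∏_{i∈S} z_i` and
`y = (a/b)·∏_{i∉S} z_i` (positive integers `z_i, a, b, D`), if `x ≠ y` then
`|x^{1/D} − y^{1/D}| ≥ 1/(b·D·max(x,y)^{(D−1)/D})`. -/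
theorem root_gap_lower_bound (D a b : ℕ) (hD : 0 < D) (ha : 0 < a) (hb : 0 < b)
    (k : ℕ) (z : Fin k → ℕ) (hz : ∀ i, 0 < z i) (S : Finset (Fin k))
    (x y : ℝ) (hx : x = ∏ i ∈ S, (z i : ℝ))
    (hy : y = ((a : ℝ) / (b : ℝ)) * ∏ i ∈ Sᶜ, (z i : ℝ))
    (hne : x ≠ y) :
    |x ^ (1 / (D : ℝ)) - y ^ (1 / (D : ℝ))|
      ≥ 1 / ((b : ℝ) * (D : ℝ) * max x y ^ (((D : ℝ) - 1) / (D : ℝ))) := by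
  have hDR : (0:ℝ) < D := by exact_mod_cast hD
  have hbR : (0:ℝ) < b := by exact_mod_cast hb
  have hxpos : 0 < x := by
    rw [hx]; exact Finset.prod_pos fun i _ => by exact_mod_cast hz i
  have hypos : 0 < y := by
    rw [hy]
    exact mul_pos (div_pos (by exact_mod_cast ha) hbR)
      (Finset.prod_pos fun i _ => by exact_mod_cast hz i)
  set M := max x y with hM
  have hMpos : 0 < M := lt_max_of_lt_left hxpos
  set u := x ^ (1 / (D:ℝ)) with hu
  set v := y ^ (1 / (D:ℝ)) with hv
  set m := M ^ (1 / (D:ℝ)) with hm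
  have hupos : 0 < u := Real.rpow_pos_of_pos hxpos _
  have hvpos : 0 < v := Real.rpow_pos_of_pos hypos _
  have hmpos : 0 < m := Real.rpow_pos_of_pos hMpos _
  have hum : u ≤ m := Real.rpow_le_rpow hxpos.le (le_max_left _ _) (by positivity)
  have hvm : v ≤ m := Real.rpow_le_rpow hypos.le (le_max_right _ _) (by positivity)
  have hroot : ∀ w : ℝ, 0 < w → (w ^ (1/(D:ℝ))) ^ D = w := fun w hw => by
    rw [← Real.rpow_natCast (w ^ (1/(D:ℝ))) D, ← Real.rpow_mul hw.le,
      one_div, inv_mul_cancel₀ (ne_of_gt hDR), Real.rpow_one]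
  -- Step 1: |x - y| ≥ 1/b
  have hstep1 : 1 / (b:ℝ) ≤ |x - y| := by
    have hbx : (b:ℝ) * x = ((b * ∏ i ∈ S, z i : ℕ) : ℝ) := by
      rw [hx]; push_cast; ring
    have hby : (b:ℝ) * y = ((a * ∏ i ∈ Sᶜ, z i : ℕ) : ℝ) := by
      rw [hy]; push_cast; field_simp
    have hne' : (b * ∏ i ∈ S, z i : ℕ) ≠ (a * ∏ i ∈ Sᶜ, z i : ℕ) := by
      intro h
      apply hne
      have h2 : (b:ℝ) * x = (b:ℝ) * y := by rw [hbx, hby, h]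
      exact mul_left_cancel₀ (ne_of_gt hbR) h2
    have h1 : (1:ℝ) ≤ |(b:ℝ)*x - (b:ℝ)*y| := by
      rw [hbx, hby]
      have hz' : ((b * ∏ i ∈ S, z i : ℕ) : ℤ) ≠ ((a * ∏ i ∈ Sᶜ, z i : ℕ) : ℤ) := by
        exact_mod_cast hne'
      have h2 : 1 ≤ |((b * ∏ i ∈ S, z i : ℕ) : ℤ) - ((a * ∏ i ∈ Sᶜ, z i : ℕ) : ℤ)| :=
        Int.one_le_abs (sub_ne_zero.mpr hz')
      exact_mod_cast h2
    rw [← mul_sub, abs_mul, abs_of_pos hbR] at h1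
    rw [div_le_iff₀ hbR]
    linarith
  -- Step 2: factorization bound
  have hfact : x - y = (∑ i ∈ Finset.range D, u ^ i * v ^ (D - 1 - i)) * (u - v) := by
    rw [geom_sum₂_mul, hroot x hxpos, hroot y hypos]
  have hsum_nonneg : 0 ≤ ∑ i ∈ Finset.range D, u ^ i * v ^ (D - 1 - i) :=
    Finset.sum_nonneg fun i _ => by positivity
  have hsum_le : ∑ i ∈ Finset.range D, u ^ i * v ^ (D - 1 - i) ≤ D * m ^ (D - 1) := by
    calc ∑ i ∈ Finset.range D, u ^ i * v ^ (D - 1 - i)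
        ≤ ∑ _i ∈ Finset.range D, m ^ (D - 1) := by
          apply Finset.sum_le_sum
          intro i hi
          have hi' : i < D := Finset.mem_range.mp hi
          have hle : u ^ i * v ^ (D - 1 - i) ≤ m ^ i * m ^ (D - 1 - i) :=
            mul_le_mul (pow_le_pow_left₀ hupos.le hum i)
              (pow_le_pow_left₀ hvpos.le hvm _) (by positivity) (by positivity)
          rw [← pow_add] at hle
          rwa [show i + (D - 1 - i) = D - 1 by omega] at hle
      _ = D * m ^ (D - 1) := by rw [Finset.sum_const, Finset.card_range, nsmul_eq_mul]
  have habs : |x - y| ≤ ((D:ℝ) * m ^ (D - 1)) * |u - v| := by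
    rw [hfact, abs_mul]
    exact mul_le_mul_of_nonneg_right (by rwa [abs_of_nonneg hsum_nonneg]) (abs_nonneg _)
  have hmD : m ^ (D - 1) = M ^ (((D:ℝ) - 1) / (D:ℝ)) := by
    rw [hm, ← Real.rpow_natCast (M ^ (1/(D:ℝ))) (D-1), ← Real.rpow_mul hMpos.le]
    congr 1
    rw [Nat.cast_sub hD, Nat.cast_one]
    ring
  rw [hmD] at habs
  have key : 1 / (b:ℝ) ≤ ((D:ℝ) * M ^ (((D:ℝ) - 1) / (D:ℝ))) * |u - v| :=
    hstep1.trans habs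
  rw [ge_iff_le, div_le_iff₀ (by positivity)]
  calc (1:ℝ) ≤ (((D:ℝ) * M ^ (((D:ℝ) - 1) / (D:ℝ))) * |u - v|) * b := by
        rw [← div_le_iff₀ hbR]; exact key
    _ = |u - v| * ((b:ℝ) * (D:ℝ) * M ^ (((D:ℝ) - 1) / (D:ℝ))) := by ring
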